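/- arXiv:2306.04756 — 4 statements merged into one kernel-verified Lean document; each statement's English description precedes it below -/
import Mathlib

section
/- Let f : ℝ^n → ℝ be twice continuously differentiable such that all eigenvalues of ∇²f(x) lie in [-ε, ρ] for all x, with ε, ρ ≥ 0. Then for any u, v ∈ ℝ^n and any η > 0: ⟨∇f(u) - ∇f(v), u - v⟩ ≥ 2η(1 - ηρ/2)‖∇f(u) - ∇f(v)‖² - ε‖u - v - η(∇f(u) - ∇f(v))‖². -/
open InnerProductSpace

/-- Taylor-type upper bound from an upper bound on the Hessian quadratic form. -/
lemma taylor_upper_aux {n : ℕ} (f : EuclideanSpace ℝ (Fin n) → ℝ)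
    (g : EuclideanSpace ℝ (Fin n) → EuclideanSpace ℝ (Fin n))
    (H : EuclideanSpace ℝ (Fin n) → EuclideanSpace ℝ (Fin n) →L[ℝ] EuclideanSpace ℝ (Fin n))
    (hg : ∀ x, HasFDerivAt f (toDual ℝ _ (g x)) x)
    (hH : ∀ x, HasFDerivAt g (H x) x)
    (c : ℝ) (hc : ∀ x w, (inner ℝ (H x w) w : ℝ) ≤ c * ‖w‖ ^ 2)
    (x y : EuclideanSpace ℝ (Fin n)) :
    f y ≤ f x + (inner ℝ (g x) (y - x) : ℝ) + c / 2 * ‖y - x‖ ^ 2 := by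
  set d := y - x with hd
  have hline : ∀ t : ℝ, HasDerivAt (fun t : ℝ => x + t • d) d t := by
    intro t
    simpa using ((hasDerivAt_id t).smul_const d).const_add x
  have hF : ∀ t : ℝ, HasDerivAt (fun t : ℝ => f (x + t • d))
      (inner ℝ (g (x + t • d)) d : ℝ) t := by
    intro t
    have := (hg (x + t • d)).comp_hasDerivAt t (hline t)
    simpa [toDual_apply_apply, Function.comp_def] using this
  have hG : ∀ t : ℝ, HasDerivAt (fun t : ℝ => (inner ℝ (g (x + t • d)) d : ℝ))
      (inner ℝ (H (x + t • d) d) d : ℝ) t := by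
    intro t
    have h1 : HasDerivAt (fun t : ℝ => g (x + t • d)) (H (x + t • d) d) t :=
      (hH (x + t • d)).comp_hasDerivAt t (hline t)
    have := h1.inner ℝ (hasDerivAt_const t d)
    simpa using this
  -- ψ is antitone
  have hψd : ∀ t : ℝ, HasDerivAt
      (fun t : ℝ => (inner ℝ (g (x + t • d)) d : ℝ) - c * t * ‖d‖ ^ 2)
      ((inner ℝ (H (x + t • d) d) d : ℝ) - c * ‖d‖ ^ 2) t := by
    intro t
    have h2 : HasDerivAt (fun t : ℝ => c * t * ‖d‖ ^ 2) (c * ‖d‖ ^ 2) t := by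
      simpa using ((hasDerivAt_id t).const_mul c).mul_const (‖d‖ ^ 2)
    exact (hG t).sub h2
  have hψ : Antitone (fun t : ℝ => (inner ℝ (g (x + t • d)) d : ℝ) - c * t * ‖d‖ ^ 2) := by
    refine antitone_of_deriv_nonpos (fun t => (hψd t).differentiableAt) (fun t => ?_)
    rw [(hψd t).deriv]
    have := hc (x + t • d) d
    linarith
  -- Φ is antitone on [0,1]
  have hΦd : ∀ t : ℝ, HasDerivAt
      (fun t : ℝ => f (x + t • d) - t * (inner ℝ (g x) d : ℝ) - c / 2 * t ^ 2 * ‖d‖ ^ 2)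
      ((inner ℝ (g (x + t • d)) d : ℝ) - (inner ℝ (g x) d : ℝ) - c * t * ‖d‖ ^ 2) t := by
    intro t
    have h1 : HasDerivAt (fun t : ℝ => t * (inner ℝ (g x) d : ℝ)) (inner ℝ (g x) d : ℝ) t := by
      simpa using (hasDerivAt_id t).mul_const (inner ℝ (g x) d : ℝ)
    have h2 : HasDerivAt (fun t : ℝ => c / 2 * t ^ 2 * ‖d‖ ^ 2) (c * t * ‖d‖ ^ 2) t := by
      have := ((hasDerivAt_pow 2 t).const_mul (c / 2)).mul_const (‖d‖ ^ 2)
      refine this.congr_deriv ?_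
      simp only [show (2:ℕ) - 1 = 1 from rfl, pow_one, Nat.cast_ofNat]
      ring
    exact ((hF t).sub h1).sub h2
  have key : AntitoneOn
      (fun t : ℝ => f (x + t • d) - t * (inner ℝ (g x) d : ℝ) - c / 2 * t ^ 2 * ‖d‖ ^ 2)
      (Set.Icc 0 1) := by
    refine antitoneOn_of_deriv_nonpos (convex_Icc 0 1)
      (Differentiable.continuous (fun t => (hΦd t).differentiableAt)).continuousOn
      (fun t _ => (hΦd t).differentiableAt.differentiableWithinAt) (fun t ht => ?_)
    rw [interior_Icc] at ht
    rw [(hΦd t).deriv]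
    have h1 := hψ (le_of_lt ht.1)
    simp only [zero_smul, add_zero, mul_zero, zero_mul, sub_zero] at h1
    linarith
  have h01 := key (Set.left_mem_Icc.2 zero_le_one) (Set.right_mem_Icc.2 zero_le_one) zero_le_one
  simp only [one_smul, zero_smul, add_zero, one_pow, mul_one, one_mul, mul_zero, zero_mul,
    sub_zero, zero_pow, ne_eq, OfNat.ofNat_ne_zero, not_false_iff] at h01
  have hxy : x + d = y := by rw [hd]; abel
  rw [hxy] at h01
  linarith

/-- Taylor-type lower bound from a lower bound on the Hessian quadratic form. -/
lemma taylor_lower_aux {n : ℕ} (f : EuclideanSpace ℝ (Fin n) → ℝ)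
    (g : EuclideanSpace ℝ (Fin n) → EuclideanSpace ℝ (Fin n))
    (H : EuclideanSpace ℝ (Fin n) → EuclideanSpace ℝ (Fin n) →L[ℝ] EuclideanSpace ℝ (Fin n))
    (hg : ∀ x, HasFDerivAt f (toDual ℝ _ (g x)) x)
    (hH : ∀ x, HasFDerivAt g (H x) x)
    (c : ℝ) (hc : ∀ x w, -c * ‖w‖ ^ 2 ≤ (inner ℝ (H x w) w : ℝ))
    (x y : EuclideanSpace ℝ (Fin n)) :
    f x + (inner ℝ (g x) (y - x) : ℝ) - c / 2 * ‖y - x‖ ^ 2 ≤ f y := by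
  have hg' : ∀ x, HasFDerivAt (fun z => -(f z)) (toDual ℝ _ (-(g x))) x := by
    intro x
    rw [map_neg]; exact (hg x).neg
  have hH' : ∀ x, HasFDerivAt (fun z => -(g z)) (-(H x)) x := fun x => (hH x).neg
  have hc' : ∀ x w, (inner ℝ ((-(H x)) w) w : ℝ) ≤ c * ‖w‖ ^ 2 := by
    intro x w
    have := hc x w
    simp only [ContinuousLinearMap.neg_apply, inner_neg_left]
    linarith
  have := taylor_upper_aux (fun z => -(f z)) (fun z => -(g z)) (fun z => -(H z))
    hg' hH' c hc' x y
  simp only [inner_neg_left] at this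
  linarith

set_option maxHeartbeats 1000000 in
/-- Almost co-coercivity of the gradient operator of a function whose Hessian eigenvalues
lie in `[-ε, ρ]` everywhere. -/
theorem stmt2 {n : ℕ} (f : EuclideanSpace ℝ (Fin n) → ℝ) (hf : ContDiff ℝ 2 f)
    (ε ρ : ℝ) (hε : 0 ≤ ε) (hρ : 0 ≤ ρ)
    (H : EuclideanSpace ℝ (Fin n) → EuclideanSpace ℝ (Fin n) →L[ℝ] EuclideanSpace ℝ (Fin n))
    (hH : ∀ x, HasFDerivAt (gradient f) (H x) x)
    (hHbound : ∀ x w, -ε * ‖w‖ ^ 2 ≤ (inner ℝ (H x w) w : ℝ) ∧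
      (inner ℝ (H x w) w : ℝ) ≤ ρ * ‖w‖ ^ 2)
    (u v : EuclideanSpace ℝ (Fin n)) (η : ℝ) (hη : 0 < η) :
    2 * η * (1 - η * ρ / 2) * ‖gradient f u - gradient f v‖ ^ 2
        - ε * ‖u - v - η • (gradient f u - gradient f v)‖ ^ 2
      ≤ (inner ℝ (gradient f u - gradient f v) (u - v) : ℝ) := by
  have hg : ∀ x, HasFDerivAt f (toDual ℝ _ (gradient f x)) x := fun x =>
    (((hf.differentiable two_ne_zero) x).hasGradientAt).hasFDerivAt
  set gu := gradient f u with hgu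
  set gv := gradient f v with hgv
  set G := gu - gv with hG
  set W := u - v - η • G with hW
  -- four quadratic bounds
  have h1 := taylor_upper_aux f (gradient f) H hg hH ρ (fun x w => (hHbound x w).2)
    u (u - η • G)
  have h2 := taylor_lower_aux f (gradient f) H hg hH ε (fun x w => (hHbound x w).1)
    v (u - η • G)
  have h3 := taylor_upper_aux f (gradient f) H hg hH ρ (fun x w => (hHbound x w).2)
    v (v + η • G)
  have h4 := taylor_lower_aux f (gradient f) H hg hH ε (fun x w => (hHbound x w).1)
    u (v + η • G)
  simp only [← hgu, ← hgv] at h1 h2 h3 h4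
  -- rewrite the displacement vectors
  have e1 : u - η • G - u = -(η • G) := by abel
  have e2 : u - η • G - v = W := by rw [hW]; abel
  have e3 : v + η • G - v = η • G := by abel
  have e4 : v + η • G - u = -W := by rw [hW]; abel
  rw [e1] at h1
  rw [e2] at h2
  rw [e3] at h3
  rw [e4] at h4
  -- norms
  have nη : ‖-(η • G)‖ ^ 2 = η ^ 2 * ‖G‖ ^ 2 := by
    rw [norm_neg, norm_smul, Real.norm_eq_abs, abs_of_pos hη, mul_pow]
  have nη' : ‖η • G‖ ^ 2 = η ^ 2 * ‖G‖ ^ 2 := by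
    rw [norm_smul, Real.norm_eq_abs, abs_of_pos hη, mul_pow]
  have nW : ‖-W‖ ^ 2 = ‖W‖ ^ 2 := by rw [norm_neg]
  rw [nη] at h1
  rw [nη'] at h3
  rw [nW] at h4
  -- inner products
  have i1 : (inner ℝ gu (-(η • G)) : ℝ) = -(η * (inner ℝ gu G : ℝ)) := by
    rw [inner_neg_right, real_inner_smul_right]
  have i2 : (inner ℝ gv W : ℝ) = (inner ℝ gv (u - v) : ℝ) - η * (inner ℝ gv G : ℝ) := by
    rw [hW, sub_eq_add_neg (u - v), inner_add_right, inner_neg_right, real_inner_smul_right]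
    ring
  have i3 : (inner ℝ gv (η • G) : ℝ) = η * (inner ℝ gv G : ℝ) := real_inner_smul_right _ _ _
  have i4 : (inner ℝ gu (-W) : ℝ) = -((inner ℝ gu (u - v) : ℝ) - η * (inner ℝ gu G : ℝ)) := by
    rw [hW, inner_neg_right, sub_eq_add_neg (u - v), inner_add_right, inner_neg_right,
      real_inner_smul_right]
    ring
  rw [i1] at h1
  rw [i2] at h2
  rw [i3] at h3
  rw [i4] at h4
  have hab : (inner ℝ gu G : ℝ) - (inner ℝ gv G : ℝ) = ‖G‖ ^ 2 := by
    rw [← inner_sub_left, ← hG, real_inner_self_eq_norm_sq]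
  have hab2 : η * (inner ℝ gu G : ℝ) - η * (inner ℝ gv G : ℝ) = η * ‖G‖ ^ 2 := by
    rw [← hab]; ring
  have hgoal : (inner ℝ G (u - v) : ℝ) = (inner ℝ gu (u - v) : ℝ) - (inner ℝ gv (u - v) : ℝ) := by
    rw [hG, inner_sub_left]
  rw [hgoal]
  nlinarith [h1, h2, h3, h4, hab2]
end

section
/- Let f : ℝ^n → ℝ be twice continuously differentiable with all Hessian eigenvalues in [-ε, ρ], ε, ρ ≥ 0. Suppose 0 < η < min(1/(2ε), 3/(2ρ)) (with 1/(2ε) interpreted as +∞ if ε = 0). Fix u, v ∈ ℝ^n and set ζ = u - v - η(∇f(u) - ∇f(v)). Then ‖ζ‖² ≤ (1/(1 - 2ηε))‖u - v‖². -/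
open InnerProductSpace

/-- Clairaut: the derivative of the gradient of a `C²` function is symmetric. -/
lemma stmt3_sym {n : ℕ} (f : EuclideanSpace ℝ (Fin n) → ℝ) (hf : ContDiff ℝ 2 f)
    (H : EuclideanSpace ℝ (Fin n) → EuclideanSpace ℝ (Fin n) →L[ℝ] EuclideanSpace ℝ (Fin n))
    (hH : ∀ x, HasFDerivAt (gradient f) (H x) x) (x w z : EuclideanSpace ℝ (Fin n)) :
    (inner ℝ (H x w) z : ℝ) = inner ℝ (H x z) w := by
  have hd : ∀ y, HasFDerivAt f (fderiv ℝ f y) y :=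
    fun y => (hf.differentiable (by norm_num) y).hasFDerivAt
  have heq : ∀ y, fderiv ℝ f y = innerSL ℝ (gradient f y) := by
    intro y
    ext z
    have : toDual ℝ (EuclideanSpace ℝ (Fin n)) (gradient f y) = fderiv ℝ f y :=
      (toDual ℝ _).apply_symm_apply _
    rw [← this]
    simp [InnerProductSpace.toDual_apply_apply]
  have hT : HasFDerivAt (fun y => fderiv ℝ f y)
      (((innerSL ℝ : EuclideanSpace ℝ (Fin n) →L[ℝ] _)).comp (H x)) x := by
    have h2 := (innerSL ℝ (E := EuclideanSpace ℝ (Fin n))).hasFDerivAt.comp x (hH x)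
    refine HasFDerivAt.congr_of_eventuallyEq h2 ?_
    filter_upwards with y using (heq y).symm ▸ rfl
  have := second_derivative_symmetric hd hT w z
  simpa [real_inner_comm] using this

/-- A symmetric continuous linear map whose quadratic form is bounded by `C‖·‖²`
has operator-type bound `‖A w‖ ≤ C ‖w‖`. -/
lemma stmt3_op_bound {E : Type*} [NormedAddCommGroup E] [InnerProductSpace ℝ E]
    (A : E →L[ℝ] E) (hsym : ∀ w z, (inner ℝ (A w) z : ℝ) = inner ℝ (A z) w)
    (C : ℝ) (hC : 0 ≤ C) (hq : ∀ w, |(inner ℝ (A w) w : ℝ)| ≤ C * ‖w‖ ^ 2)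
    (w : E) : ‖A w‖ ≤ C * ‖w‖ := by
  have bil : ∀ p q : E, (inner ℝ (A p) q : ℝ) ≤ C / 2 * (‖p‖ ^ 2 + ‖q‖ ^ 2) := by
    intro p q
    have e : (inner ℝ (A (p + q)) (p + q) : ℝ) - inner ℝ (A (p - q)) (p - q)
        = 4 * inner ℝ (A p) q := by
      simp only [map_add, map_sub, inner_add_left, inner_add_right,
        inner_sub_left, inner_sub_right]
      rw [hsym q p]
      ring
    have h1 := (abs_le.mp (hq (p + q))).2
    have h2 := (abs_le.mp (hq (p - q))).1
    have hpar : ‖p + q‖ ^ 2 + ‖p - q‖ ^ 2 = 2 * ‖p‖ ^ 2 + 2 * ‖q‖ ^ 2 := by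
      rw [norm_add_sq_real, norm_sub_sq_real]; ring
    have hpar' : C * (‖p + q‖ ^ 2 + ‖p - q‖ ^ 2) = C * (2 * ‖p‖ ^ 2 + 2 * ‖q‖ ^ 2) := by
      rw [hpar]
    nlinarith [e, h1, h2, hpar']
  have scale : (inner ℝ (A w) (A w) : ℝ) ≤ C * ‖w‖ * ‖A w‖ := by
    rcases eq_or_ne (A w) 0 with h0 | h0
    · simp [h0]
    rcases eq_or_ne w 0 with hw0 | hw0
    · simp [hw0] at h0
    have hwpos : (0:ℝ) < ‖w‖ := norm_pos_iff.mpr hw0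
    have hApos : (0:ℝ) < ‖A w‖ := norm_pos_iff.mpr h0
    set t : ℝ := Real.sqrt (‖A w‖ / ‖w‖) with ht
    have htpos : 0 < t := Real.sqrt_pos.mpr (by positivity)
    have ht2 : t ^ 2 = ‖A w‖ / ‖w‖ := Real.sq_sqrt (by positivity)
    have := bil (t • w) (t⁻¹ • (A w))
    rw [map_smul, inner_smul_left, inner_smul_right] at this
    simp only [RCLike.star_def, conj_trivial] at this
    have hinner : t * (t⁻¹ * (inner ℝ (A w) (A w) : ℝ)) = inner ℝ (A w) (A w) := by
      field_simp
    rw [hinner] at this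
    have hn1 : ‖t • w‖ ^ 2 = t ^ 2 * ‖w‖ ^ 2 := by
      rw [norm_smul, Real.norm_eq_abs, abs_of_pos htpos, mul_pow]
    have hn2 : ‖t⁻¹ • A w‖ ^ 2 = t⁻¹ ^ 2 * ‖A w‖ ^ 2 := by
      rw [norm_smul, Real.norm_eq_abs, abs_of_pos (inv_pos.mpr htpos), mul_pow]
    rw [hn1, hn2] at this
    have hi2 : t⁻¹ ^ 2 = ‖w‖ / ‖A w‖ := by
      rw [inv_pow, ht2]; field_simp
    rw [ht2, hi2] at this
    calc (inner ℝ (A w) (A w) : ℝ) ≤ C / 2 * (‖A w‖ / ‖w‖ * ‖w‖ ^ 2 + ‖w‖ / ‖A w‖ * ‖A w‖ ^ 2) :=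
          this
      _ = C * ‖w‖ * ‖A w‖ := by field_simp; ring
  have hsq : ‖A w‖ ^ 2 ≤ C * ‖w‖ * ‖A w‖ := by
    rw [← real_inner_self_eq_norm_sq]; exact scale
  rcases eq_or_lt_of_le (norm_nonneg (A w)) with h0 | h0
  · rw [← h0]; positivity
  · have := mul_le_mul_of_nonneg_right (le_refl (‖A w‖)) (le_of_lt h0)
    nlinarith
  
/-- Lemma 2 of the paper: bound on `‖ζ‖²` where `ζ = u - v - η(∇f(u) - ∇f(v))`, for a
function with Hessian eigenvalues in `[-ε, ρ]` and step size `η < min(1/(2ε), 3/(2ρ))`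
(the conditions `2ηε < 1` and `2ηρ < 3` encode this, including the case `ε = 0`). -/
theorem stmt3 {n : ℕ} (f : EuclideanSpace ℝ (Fin n) → ℝ) (hf : ContDiff ℝ 2 f)
    (ε ρ : ℝ) (hε : 0 ≤ ε) (hρ : 0 ≤ ρ)
    (H : EuclideanSpace ℝ (Fin n) → EuclideanSpace ℝ (Fin n) →L[ℝ] EuclideanSpace ℝ (Fin n))
    (hH : ∀ x, HasFDerivAt (gradient f) (H x) x)
    (hHbound : ∀ x w, -ε * ‖w‖ ^ 2 ≤ (inner ℝ (H x w) w : ℝ) ∧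
      (inner ℝ (H x w) w : ℝ) ≤ ρ * ‖w‖ ^ 2)
    (u v : EuclideanSpace ℝ (Fin n)) (η : ℝ) (hη : 0 < η)
    (hη₁ : 2 * η * ε < 1) (hη₂ : 2 * η * ρ < 3) :
    ‖u - v - η • (gradient f u - gradient f v)‖ ^ 2
      ≤ (1 / (1 - 2 * η * ε)) * ‖u - v‖ ^ 2 := by
  -- pointwise bound `‖w - η • H x w‖ ≤ (1 + ηε) ‖w‖`
  have key : ∀ (x w : EuclideanSpace ℝ (Fin n)), ‖w - η • H x w‖ ≤ (1 + η * ε) * ‖w‖ := by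
    intro x w
    set A := ContinuousLinearMap.id ℝ (EuclideanSpace ℝ (Fin n)) - η • H x with hA
    have hAapp : ∀ p, A p = p - η • H x p := fun p => rfl
    have hsym : ∀ p q, (inner ℝ (A p) q : ℝ) = inner ℝ (A q) p := by
      intro p q
      simp only [hAapp, inner_sub_left, inner_smul_left, RCLike.star_def, conj_trivial]
      rw [stmt3_sym f hf H hH x p q, real_inner_comm p q]
    have hq : ∀ p, |(inner ℝ (A p) p : ℝ)| ≤ (1 + η * ε) * ‖p‖ ^ 2 := by
      intro p
      have hb := hHbound x p
      have : (inner ℝ (A p) p : ℝ) = ‖p‖ ^ 2 - η * inner ℝ (H x p) p := by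
        simp only [hAapp, inner_sub_left, inner_smul_left, RCLike.star_def, conj_trivial,
          real_inner_self_eq_norm_sq]
      rw [this, abs_le]
      have m2 := mul_le_mul_of_nonneg_left hb.2 hη.le
      have m1 := mul_le_mul_of_nonneg_left hb.1 hη.le
      constructor
      · nlinarith [sq_nonneg ‖p‖, m2, mul_nonneg (mul_nonneg hη.le hε) (sq_nonneg ‖p‖)]
      · nlinarith [sq_nonneg ‖p‖, m1]
    have := stmt3_op_bound A hsym (1 + η * ε) (by nlinarith) hq w
    rw [hAapp w] at this
    exact this
  set d := u - v with hd
  set γ : ℝ → EuclideanSpace ℝ (Fin n) := fun t => v + t • d with hγ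
  have hγd : ∀ t : ℝ, HasDerivAt γ d t := by
    intro t
    have h1 : HasDerivAt (fun s : ℝ => s • d) ((1:ℝ) • d) t := (hasDerivAt_id t).smul_const d
    simpa only [one_smul] using h1.const_add v
  have hφ : ∀ t : ℝ, HasDerivAt (fun s => gradient f (γ s)) (H (γ t) d) t := by
    intro t
    exact (hH (γ t)).comp_hasDerivAt t (hγd t)
  -- continuity of the integrand
  have hgradC : ContDiff ℝ 1 (gradient f) := by
    have h1 : ContDiff ℝ 1 (fun y => fderiv ℝ f y) := hf.fderiv_right (m := 1) (by norm_num)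
    exact ((toDual ℝ (EuclideanSpace ℝ (Fin n))).symm.contDiff).comp h1
  have hHeq : ∀ x, H x = fderiv ℝ (gradient f) x := fun x => ((hH x).fderiv).symm
  have hHcont : Continuous fun x => fderiv ℝ (gradient f) x :=
    hgradC.continuous_fderiv (by norm_num)
  have hγcont : Continuous γ := by
    exact continuous_const.add (continuous_id.smul continuous_const)
  have hcont : Continuous fun t => H (γ t) d := by
    have : (fun t => H (γ t) d) = fun t => (fderiv ℝ (gradient f) (γ t)) d := by
      funext t; rw [hHeq]
    rw [this]
    exact (hHcont.comp hγcont).clm_apply continuous_const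
  have hInt : IntervalIntegrable (fun t => H (γ t) d) MeasureTheory.volume 0 1 :=
    hcont.intervalIntegrable 0 1
  have hFTC : ∫ t in (0:ℝ)..1, H (γ t) d = gradient f (γ 1) - gradient f (γ 0) :=
    intervalIntegral.integral_eq_sub_of_hasDerivAt (fun t _ => hφ t) hInt
  have hγ1 : γ 1 = u := by simp [hγ, hd]
  have hγ0 : γ 0 = v := by simp [hγ]
  have hζ : u - v - η • (gradient f u - gradient f v)
      = ∫ t in (0:ℝ)..1, (d - η • H (γ t) d) := by
    have hInt2 : IntervalIntegrable (fun t => η • H (γ t) d) MeasureTheory.volume 0 1 :=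
      ((hcont.const_smul η).intervalIntegrable 0 1)
    rw [intervalIntegral.integral_sub intervalIntegrable_const hInt2,
      intervalIntegral.integral_const, intervalIntegral.integral_smul, hFTC, hγ1, hγ0]
    simp [hd]
  have hbound : ‖∫ t in (0:ℝ)..1, (d - η • H (γ t) d)‖ ≤ ((1 + η * ε) * ‖d‖) * |1 - 0| := by
    apply intervalIntegral.norm_integral_le_of_norm_le_const
    intro t _
    exact key (γ t) d
  have hnorm : ‖u - v - η • (gradient f u - gradient f v)‖ ≤ (1 + η * ε) * ‖u - v‖ := by
    rw [hζ, ← hd]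
    simpa using hbound
  have hpos : (0:ℝ) < 1 - 2 * η * ε := by linarith
  rw [div_mul_eq_mul_div, one_mul, le_div_iff₀ hpos]
  have h2 : ‖u - v - η • (gradient f u - gradient f v)‖ ^ 2 ≤ ((1 + η * ε) * ‖u - v‖) ^ 2 :=
    pow_le_pow_left₀ (norm_nonneg _) hnorm 2
  nlinarith [mul_le_mul_of_nonneg_right h2 hpos.le,
    mul_nonneg (mul_nonneg (mul_nonneg hη.le hε) (mul_nonneg hη.le hε)) (sq_nonneg ‖u - v‖),
    mul_nonneg (mul_nonneg (mul_nonneg (mul_nonneg hη.le hε) (mul_nonneg hη.le hε)) (mul_nonneg hη.le hε)) (sq_nonneg ‖u - v‖)]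
end

section
/- Let f : ℝ^n → ℝ be twice continuously differentiable with all Hessian eigenvalues in [-ε, ρ] for ε, ρ ≥ 0, and let x* be a point with ∇f(x*) = 0. Suppose a sequence (x^k) satisfies the gradient descent update x^{k+1} = x^k - η∇f(x^k) with η ≤ min(1/(4ε), 3/(2ρ)), and suppose the local error bound ‖∇f(x^k)‖ ≥ μ‖x^k - x*‖ holds at every iterate for some μ > 0. Then for every k: ‖x^{k+1} - x*‖² ≤ (1 - 4η²μ²(3/4 - ηρ/2) + 2ηε/(1 - 2ηε))‖x^k - x*‖². -/
local notation "⟪" x ", " y "⟫" => @inner ℝ _ _ x y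

private lemma key_aux {E : Type*} [NormedAddCommGroup E] [InnerProductSpace ℝ E]
    (Iq : E → E → ℝ) (w g : E) (r₁ r₂ : ℝ) (hr : r₁ < r₂)
    (hFTC : ∀ u, Iq w u = ⟪g, u⟫)
    (hub : ∀ v, Iq v v ≤ r₂ * ‖v‖ ^ 2)
    (hlb : ∀ v, r₁ * ‖v‖ ^ 2 ≤ Iq v v)
    (hexp : ∀ (a : ℝ) (u v : E), Iq (u + a • v) (u + a • v)
      = Iq u u + a * Iq u v + a * Iq v u + a ^ 2 * Iq v v)
    (hsym : ∀ u v, Iq u v = Iq v u) :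
    ‖g‖ ^ 2 ≤ (r₁ + r₂) * ⟪g, w⟫ - r₁ * r₂ * ‖w‖ ^ 2 := by
  have hrr : (0:ℝ) < r₂ - r₁ := by linarith
  set τ : ℝ := 1 / (r₂ - r₁) with hτdef
  set u₀ : E := g - r₁ • w with hu₀
  have hτ1 : τ * (r₂ - r₁) = 1 := by rw [hτdef, one_div, inv_mul_cancel₀ hrr.ne']
  have hττ : 2 * τ - τ ^ 2 * (r₂ - r₁) = τ := by
    have h : τ ^ 2 * (r₂ - r₁) = τ := by rw [pow_two, mul_assoc, hτ1, mul_one]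
    linarith
  have E0 : Iq (w + (-τ) • u₀) (w + (-τ) • u₀)
      = Iq w w + (-τ) * Iq w u₀ + (-τ) * Iq u₀ w + (-τ) ^ 2 * Iq u₀ u₀ := hexp _ _ _
  have Es : Iq u₀ w = Iq w u₀ := hsym _ _
  have E1 : Iq w w = ⟪g, w⟫ := hFTC w
  have E2 : Iq w u₀ = ‖g‖ ^ 2 - r₁ * ⟪g, w⟫ := by
    rw [hFTC u₀, hu₀, inner_sub_right, real_inner_smul_right,
      real_inner_self_eq_norm_sq]
  have E3 : Iq u₀ u₀ ≤ r₂ * ‖u₀‖ ^ 2 := hub _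
  have E4 : r₁ * ‖w + (-τ) • u₀‖ ^ 2 ≤ Iq (w + (-τ) • u₀) (w + (-τ) • u₀) := hlb _
  have E5 : ‖w + (-τ) • u₀‖ ^ 2 = ‖w‖ ^ 2 - 2 * τ * ⟪w, u₀⟫ + τ ^ 2 * ‖u₀‖ ^ 2 := by
    rw [norm_add_sq_real, real_inner_smul_right, norm_smul]
    simp [mul_pow, sq_abs]
    ring
  have E6 : ⟪w, u₀⟫ = ⟪g, w⟫ - r₁ * ‖w‖ ^ 2 := by
    rw [hu₀, inner_sub_right, real_inner_smul_right, real_inner_self_eq_norm_sq,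
      real_inner_comm w g]
  have E7 : ‖u₀‖ ^ 2 = ‖g‖ ^ 2 - 2 * r₁ * ⟪g, w⟫ + r₁ ^ 2 * ‖w‖ ^ 2 := by
    rw [hu₀, norm_sub_sq_real, real_inner_smul_right, norm_smul]
    simp [mul_pow, sq_abs]
    ring
  have comb : Iq (w + (-τ) • u₀) (w + (-τ) • u₀) - r₁ * ‖w + (-τ) • u₀‖ ^ 2
      = (⟪g, w⟫ - r₁ * ‖w‖ ^ 2) - (2 * τ - τ ^ 2 * (r₂ - r₁)) * ‖u₀‖ ^ 2
        + τ ^ 2 * (Iq u₀ u₀ - r₂ * ‖u₀‖ ^ 2) := by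
    rw [E0, Es, E1, E2, E5, E6, E7]; ring
  have m1 : τ ^ 2 * (Iq u₀ u₀ - r₂ * ‖u₀‖ ^ 2) ≤ 0 := by
    have := sub_nonpos.mpr E3
    nlinarith [sq_nonneg τ]
  have step1 : τ * ‖u₀‖ ^ 2 ≤ ⟪g, w⟫ - r₁ * ‖w‖ ^ 2 := by
    have h0 : 0 ≤ Iq (w + (-τ) • u₀) (w + (-τ) • u₀) - r₁ * ‖w + (-τ) • u₀‖ ^ 2 := by
      linarith [E4]
    rw [comb, hττ] at h0
    linarith [m1]
  have step2 : ‖u₀‖ ^ 2 ≤ (r₂ - r₁) * (⟪g, w⟫ - r₁ * ‖w‖ ^ 2) := by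
    calc ‖u₀‖ ^ 2 = (r₂ - r₁) * (τ * ‖u₀‖ ^ 2) := by
          rw [← mul_assoc, mul_comm (r₂ - r₁) τ, hτ1, one_mul]
      _ ≤ (r₂ - r₁) * (⟪g, w⟫ - r₁ * ‖w‖ ^ 2) :=
          mul_le_mul_of_nonneg_left step1 (le_of_lt hrr)
  nlinarith [step2, E7]

set_option maxHeartbeats 2000000 in
/-- Linear convergence of gradient descent (Theorem 3 of the paper, GAN inversion case):
if the Hessian eigenvalues lie in `[-ε, ρ]`, `∇f(x*) = 0`, the step size satisfies
`η ≤ min(1/(4ε), 3/(2ρ))` (encoded as `4ηε ≤ 1` and `2ηρ ≤ 3`), and the local error bound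
`‖∇f(x^k)‖ ≥ μ‖x^k - x*‖` holds along the trajectory, then the iterates contract with
factor `1 - 4η²μ²(3/4 - ηρ/2) + 2ηε/(1 - 2ηε)`. -/
theorem stmt4 {n : ℕ} (f : EuclideanSpace ℝ (Fin n) → ℝ) (hf : ContDiff ℝ 2 f)
    (ε ρ : ℝ) (hε : 0 ≤ ε) (hρ : 0 ≤ ρ)
    (H : EuclideanSpace ℝ (Fin n) → EuclideanSpace ℝ (Fin n) →L[ℝ] EuclideanSpace ℝ (Fin n))
    (hH : ∀ x, HasFDerivAt (gradient f) (H x) x)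
    (hHbound : ∀ x w, -ε * ‖w‖ ^ 2 ≤ (inner ℝ (H x w) w : ℝ) ∧
      (inner ℝ (H x w) w : ℝ) ≤ ρ * ‖w‖ ^ 2)
    (xs : EuclideanSpace ℝ (Fin n)) (hxs : gradient f xs = 0)
    (x : ℕ → EuclideanSpace ℝ (Fin n)) (η : ℝ) (hη : 0 < η)
    (hη₁ : 4 * η * ε ≤ 1) (hη₂ : 2 * η * ρ ≤ 3)
    (hupd : ∀ k, x (k + 1) = x k - η • gradient f (x k))
    (μ : ℝ) (hμ : 0 < μ)
    (heb : ∀ k, μ * ‖x k - xs‖ ≤ ‖gradient f (x k)‖) :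
    ∀ k, ‖x (k + 1) - xs‖ ^ 2
      ≤ (1 - 4 * η ^ 2 * μ ^ 2 * (3 / 4 - η * ρ / 2) + 2 * η * ε / (1 - 2 * η * ε))
        * ‖x k - xs‖ ^ 2 := by
  -- continuity of the Hessian field
  have hHc : Continuous H := by
    have hgc : ContDiff ℝ 1 (gradient f) := by
      have h1 : ContDiff ℝ 1 (fderiv ℝ f) := hf.fderiv_right (by norm_num)
      exact (InnerProductSpace.toDual ℝ (EuclideanSpace ℝ (Fin n))).symm.contDiff.comp h1
    have hEq : H = fderiv ℝ (gradient f) := funext fun y => ((hH y).fderiv).symm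
    rw [hEq]
    exact hgc.continuous_fderiv (by norm_num)
  -- symmetry of the Hessian
  have hsymH : ∀ y u v, ⟪H y u, v⟫ = ⟪H y v, u⟫ := by
    intro y u v
    have hdf : Differentiable ℝ f := hf.differentiable (by norm_num)
    set L : EuclideanSpace ℝ (Fin n) →L[ℝ] (EuclideanSpace ℝ (Fin n) →L[ℝ] ℝ) :=
      (InnerProductSpace.toDualMap ℝ (EuclideanSpace ℝ (Fin n))).toContinuousLinearMap with hL
    have hf' : ∀ z, HasFDerivAt f (fderiv ℝ f z) z := fun z => (hdf z).hasFDerivAt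
    have hgrad : (fun z => fderiv ℝ f z) = fun z => L (gradient f z) := by
      funext z
      have h1 : gradient f z
          = (InnerProductSpace.toDual ℝ (EuclideanSpace ℝ (Fin n))).symm (fderiv ℝ f z) := rfl
      rw [h1, hL]
      rw [LinearIsometry.coe_toContinuousLinearMap]
      rw [show ((InnerProductSpace.toDualMap ℝ (EuclideanSpace ℝ (Fin n))) : _)
        = ((InnerProductSpace.toDual ℝ (EuclideanSpace ℝ (Fin n))) : _ → _) from rfl]
      rw [LinearIsometryEquiv.apply_symm_apply]
    have hf'' : HasFDerivAt (fun z => fderiv ℝ f z) (L.comp (H y)) y := by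
      rw [hgrad]
      exact L.hasFDerivAt.comp y (hH y)
    have hs := second_derivative_symmetric hf' hf'' u v
    have h2 : ∀ a b : EuclideanSpace ℝ (Fin n), (L.comp (H y)) a b = ⟪H y a, b⟫ := by
      intro a b
      rw [ContinuousLinearMap.comp_apply, hL, LinearIsometry.coe_toContinuousLinearMap,
        InnerProductSpace.toDualMap_apply_apply]
    rw [h2, h2] at hs
    exact hs
  intro k
  have hden : (0:ℝ) < 1 - 2 * η * ε := by nlinarith
  set w : EuclideanSpace ℝ (Fin n) := x k - xs with hwdef
  set g : EuclideanSpace ℝ (Fin n) := gradient f (x k) with hgdef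
  set γ : ℝ → EuclideanSpace ℝ (Fin n) := fun s => xs + s • w with hγdef
  have hγ0 : γ 0 = xs := by simp [hγdef]
  have hγ1 : γ 1 = x k := by simp [hγdef, hwdef]
  have hγcont : Continuous γ := by
    apply continuous_const.add
    exact continuous_id.smul continuous_const
  have hcont : ∀ u v, Continuous fun s => ⟪H (γ s) u, v⟫ := fun u v =>
    (((hHc.comp hγcont).clm_apply continuous_const).inner continuous_const)
  set Iq : EuclideanSpace ℝ (Fin n) → EuclideanSpace ℝ (Fin n) → ℝ :=
    fun u v => ∫ s in (0:ℝ)..1, ⟪H (γ s) u, v⟫ with hIqdef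
  have hInt : ∀ u v, IntervalIntegrable (fun s => ⟪H (γ s) u, v⟫)
      MeasureTheory.volume 0 1 := fun u v => (hcont u v).intervalIntegrable 0 1
  -- fundamental theorem of calculus
  have hFTC : ∀ u, Iq w u = ⟪g, u⟫ := by
    intro u
    have hd : ∀ s ∈ Set.uIcc (0:ℝ) 1,
        HasDerivAt (fun s => ⟪u, gradient f (γ s)⟫) ⟪u, H (γ s) w⟫ s := by
      intro s _
      have h1 : HasDerivAt γ w s := by
        have := ((hasDerivAt_id s).smul_const w).const_add xs
        simpa [hγdef] using this
      have h2 : HasDerivAt (fun s => gradient f (γ s)) (H (γ s) w) s :=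
        (hH (γ s)).comp_hasDerivAt s h1
      have h3 := ((innerSL ℝ u).hasFDerivAt).comp_hasDerivAt s h2
      exact h3
    have hi : IntervalIntegrable (fun s => ⟪u, H (γ s) w⟫) MeasureTheory.volume 0 1 := by
      apply Continuous.intervalIntegrable
      exact continuous_const.inner ((hHc.comp hγcont).clm_apply continuous_const)
    have hftc := intervalIntegral.integral_eq_sub_of_hasDerivAt hd hi
    rw [hγ1, hγ0, hxs] at hftc
    simp only [inner_zero_right, sub_zero] at hftc
    have : Iq w u = ∫ s in (0:ℝ)..1, ⟪u, H (γ s) w⟫ := by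
      show (∫ s in (0:ℝ)..1, ⟪H (γ s) w, u⟫) = ∫ s in (0:ℝ)..1, ⟪u, H (γ s) w⟫
      exact intervalIntegral.integral_congr fun s _ => real_inner_comm _ _
    rw [this, hftc, ← hgdef, real_inner_comm]
  -- quadratic bounds
  have hub : ∀ v, Iq v v ≤ ρ * ‖v‖ ^ 2 := by
    intro v
    have h := intervalIntegral.integral_mono_on (by norm_num : (0:ℝ) ≤ 1) (hInt v v)
      (intervalIntegrable_const) (fun s _ => (hHbound (γ s) v).2)
    simpa using h
  have hlb : ∀ v, -ε * ‖v‖ ^ 2 ≤ Iq v v := by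
    intro v
    have h := intervalIntegral.integral_mono_on (by norm_num : (0:ℝ) ≤ 1)
      (intervalIntegrable_const) (hInt v v) (fun s _ => (hHbound (γ s) v).1)
    simpa using h
  -- bilinearity expansion
  have hexp : ∀ (a : ℝ) (u v : EuclideanSpace ℝ (Fin n)), Iq (u + a • v) (u + a • v)
      = Iq u u + a * Iq u v + a * Iq v u + a ^ 2 * Iq v v := by
    intro a u v
    have hpt : (fun s => ⟪H (γ s) (u + a • v), u + a • v⟫)
        = fun s => ⟪H (γ s) u, u⟫ + a * ⟪H (γ s) u, v⟫ + a * ⟪H (γ s) v, u⟫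
          + a ^ 2 * ⟪H (γ s) v, v⟫ := by
      funext s
      simp only [map_add, map_smul, inner_add_left, inner_add_right,
        real_inner_smul_left, real_inner_smul_right]
      ring
    rw [hIqdef]
    simp only []
    rw [hpt]
    rw [intervalIntegral.integral_add (((hInt u u).add ((hInt u v).const_mul a)).add
        ((hInt v u).const_mul a)) ((hInt v v).const_mul (a ^ 2)),
      intervalIntegral.integral_add ((hInt u u).add ((hInt u v).const_mul a))
        ((hInt v u).const_mul a),
      intervalIntegral.integral_add (hInt u u) ((hInt u v).const_mul a),
      intervalIntegral.integral_const_mul, intervalIntegral.integral_const_mul,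
      intervalIntegral.integral_const_mul]
  have hsymI : ∀ u v, Iq u v = Iq v u := by
    intro u v
    show (∫ s in (0:ℝ)..1, ⟪H (γ s) u, v⟫) = ∫ s in (0:ℝ)..1, ⟪H (γ s) v, u⟫
    exact intervalIntegral.integral_congr fun s _ => hsymH (γ s) u v
  -- instantiate the key lemma
  have hc : (0:ℝ) < η * (2 - η * ρ) := by nlinarith
  set r₂ : ℝ := ε + 1 / (η * (2 - η * ρ)) with hr₂def
  have hr₂ρ : ρ ≤ r₂ := by
    have h1 : ρ * (η * (2 - η * ρ)) ≤ 1 := by nlinarith [sq_nonneg (η * ρ - 1)]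
    have h2 : ρ ≤ 1 / (η * (2 - η * ρ)) := by
      rw [le_div_iff₀ hc]; linarith
    rw [hr₂def]; linarith
  have hr : -ε < r₂ := by
    have : 0 < 1 / (η * (2 - η * ρ)) := by positivity
    rw [hr₂def]; linarith
  have hkey := key_aux Iq w g (-ε) r₂ hr hFTC
    (fun v => le_trans (hub v) (by nlinarith [sq_nonneg ‖v‖])) hlb hexp hsymI
  -- arithmetic endgame
  have hG2 : μ ^ 2 * ‖w‖ ^ 2 ≤ ‖g‖ ^ 2 := by
    have h := heb k
    rw [← hwdef, ← hgdef] at h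
    nlinarith [norm_nonneg w, norm_nonneg g, mul_nonneg hμ.le (norm_nonneg w)]
  have hcr : (η * (2 - η * ρ)) * r₂ = (η * (2 - η * ρ)) * ε + 1 := by
    rw [hr₂def, mul_add, mul_one_div_cancel hc.ne']
  have hckey : (η * (2 - η * ρ)) * ‖g‖ ^ 2
      ≤ ⟪g, w⟫ + ((η * (2 - η * ρ)) * ε ^ 2 + ε) * ‖w‖ ^ 2 := by
    have h5 := mul_le_mul_of_nonneg_left hkey hc.le
    have h7 : (η * (2 - η * ρ)) * ((-ε + r₂) * ⟪g, w⟫ - (-ε) * r₂ * ‖w‖ ^ 2)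
        = ⟪g, w⟫ + ((η * (2 - η * ρ)) * ε ^ 2 + ε) * ‖w‖ ^ 2 := by
      linear_combination (⟪g, w⟫ + ε * ‖w‖ ^ 2) * hcr
    linarith [h5, h7.le, h7.ge]
  have hxk : x (k + 1) - xs = w - η • g := by
    rw [hupd k, ← hgdef, hwdef]
    abel
  rw [hxk, norm_sub_sq_real, real_inner_smul_right, norm_smul, mul_pow,
    Real.norm_eq_abs, sq_abs]
  have hio : (inner ℝ w g : ℝ) = inner ℝ g w := real_inner_comm _ _
  rw [hio]
  set d : ℝ := 2 * η * ε / (1 - 2 * η * ε) with hddef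
  have hd : d * (1 - 2 * η * ε) = 2 * η * ε := div_mul_cancel₀ _ hden.ne'
  have t1 : -(2 * η) * ⟪g, w⟫ ≤ -(2 * η) * ((η * (2 - η * ρ)) * ‖g‖ ^ 2)
      + 2 * η * ((η * (2 - η * ρ)) * ε ^ 2 + ε) * ‖w‖ ^ 2 := by nlinarith [hckey, hη]
  have h32 : 0 ≤ (3 - 2 * η * ρ) * η ^ 2 := by nlinarith [sq_nonneg η]
  have t2 := mul_le_mul_of_nonneg_left hG2 h32
  have hccG : 2 * η * ((η * (2 - η * ρ)) * ‖g‖ ^ 2)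
      = η ^ 2 * ‖g‖ ^ 2 + (3 - 2 * η * ρ) * η ^ 2 * ‖g‖ ^ 2 := by ring
  have t3 : 2 * η * ((η * (2 - η * ρ)) * ε ^ 2 + ε) * ‖w‖ ^ 2 ≤ d * ‖w‖ ^ 2 := by
    have hd2 : 2 * η * ((η * (2 - η * ρ)) * ε ^ 2 + ε) ≤ d := by
      rw [hddef, le_div_iff₀ hden]
      have ha : (0:ℝ) ≤ η ^ 3 * ε ^ 3 := by positivity
      have hb : (0:ℝ) ≤ η ^ 3 * ε ^ 2 * ρ * (1 - 2 * η * ε) :=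
        mul_nonneg (by positivity) hden.le
      nlinarith [ha, hb]
    exact mul_le_mul_of_nonneg_right hd2 (sq_nonneg ‖w‖)
  have hrhs : (1 - 4 * η ^ 2 * μ ^ 2 * (3 / 4 - η * ρ / 2) + d) * ‖w‖ ^ 2
      = ‖w‖ ^ 2 - (3 - 2 * η * ρ) * η ^ 2 * (μ ^ 2 * ‖w‖ ^ 2) + d * ‖w‖ ^ 2 := by ring
  linarith [t1, t2, t3, hccG.le, hccG.ge, hrhs.le, hrhs.ge]
end

section
/- Let f : ℝ^n × ℝ^m → ℝ be differentiable with ρ-Lipschitz gradient, h : ℝ^m → ℝ convex, and L(z, c) = f(z, c) + h(c). Let (z*, c*) minimize L. Suppose the iterates z^{k+1} = z^k - (1/ρ)∇_z f(z^k, c^k) and c^{k+1} = prox_{(1/ρ)h}(c^k - (1/ρ)∇_c f(z^k, c^k)) satisfy the proximal-PL condition 2ρD(c^k, ρ) + ‖∇_z f(z^k, c^k)‖² ≥ μ(L(z^k, c^k) - L(z*, c*)) for some μ > 0, where D(c, ρ) = -min_y [⟨∇_c f(z^k, c), y - c⟩ + (ρ/2)‖y - c‖² + h(y) - h(c)]. Then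 L(z^{k+1}, c^{k+1}) - L(z*, c*) ≤ (1 - μ/(2ρ))(L(z^k, c^k) - L(z*, c*)). -/
open RealInnerProductSpace

/-- 1-D descent lemma: a differentiable function with `ρ`-Lipschitz gradient satisfies the
quadratic upper bound. -/
lemma grad_descent_aux {E : Type*} [NormedAddCommGroup E] [InnerProductSpace ℝ E]
    [CompleteSpace E]
    (g : E → ℝ) (G : E → E) (hg : ∀ x, HasGradientAt g (G x) x)
    (ρ : ℝ) (hρ : 0 ≤ ρ) (hLip : ∀ x y, ‖G x - G y‖ ≤ ρ * ‖x - y‖)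
    (x u : E) :
    g (x + u) ≤ g x + ⟪G x, u⟫ + ρ / 2 * ‖u‖ ^ 2 := by
  set A : ℝ := ⟪G x, u⟫ with hA
  set B : ℝ := ρ * ‖u‖ ^ 2 with hB
  have hψ : ∀ t : ℝ, HasDerivAt (fun s : ℝ => g (x + s • u)) ⟪G (x + t • u), u⟫ t := by
    intro t
    have h1 : HasDerivAt (fun s : ℝ => x + s • u) u t := by
      simpa using ((hasDerivAt_id t).smul_const u).const_add x
    have h2 := ((hg (x + t • u)).hasFDerivAt).comp_hasDerivAt t h1
    exact h2
  set χ : ℝ → ℝ := fun t => g (x + t • u) - A * t - B / 2 * t ^ 2 with hχdef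
  have hχ : ∀ t : ℝ, HasDerivAt χ (⟪G (x + t • u), u⟫ - A - B * t) t := by
    intro t
    have h2 : HasDerivAt (fun t : ℝ => A * t) A t := by
      simpa using (hasDerivAt_id t).const_mul A
    have h3 : HasDerivAt (fun t : ℝ => B / 2 * t ^ 2) (B * t) t := by
      have := (hasDerivAt_pow 2 t).const_mul (B / 2)
      refine this.congr_deriv ?_
      push_cast
      ring
    exact ((hψ t).sub h2).sub h3
  have key : χ 1 ≤ χ 0 := by
    have hmono : AntitoneOn χ (Set.Icc (0:ℝ) 1) := by
      refine antitoneOn_of_deriv_nonpos (convex_Icc 0 1)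
        (fun t _ => ((hχ t).continuousAt).continuousWithinAt)
        (fun t _ => ((hχ t).differentiableAt).differentiableWithinAt) ?_
      intro t ht
      rw [interior_Icc] at ht
      rw [(hχ t).deriv]
      have hb : ⟪G (x + t • u) - G x, u⟫ ≤ B * t := by
        calc ⟪G (x + t • u) - G x, u⟫ ≤ ‖G (x + t • u) - G x‖ * ‖u‖ :=
              real_inner_le_norm _ _
          _ ≤ ρ * ‖x + t • u - x‖ * ‖u‖ :=
              mul_le_mul_of_nonneg_right (hLip _ _) (norm_nonneg u)
          _ = B * t := by
              rw [add_sub_cancel_left, norm_smul, Real.norm_eq_abs, abs_of_pos ht.1, hB]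
              ring
      have hsub : ⟪G (x + t • u), u⟫ - A = ⟪G (x + t • u) - G x, u⟫ := by
        rw [inner_sub_left, hA]
      linarith
    exact hmono (Set.left_mem_Icc.2 zero_le_one) (Set.right_mem_Icc.2 zero_le_one) zero_le_one
  have h0 : χ 0 = g x := by simp [hχdef]
  have h1 : χ 1 = g (x + u) - A - B / 2 := by simp [hχdef]
  rw [h0, h1] at key
  rw [hB] at key
  linarith

/-- Two-sided quadratic approximation. -/
lemma grad_approx_aux {E : Type*} [NormedAddCommGroup E] [InnerProductSpace ℝ E]
    [CompleteSpace E]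
    (g : E → ℝ) (G : E → E) (hg : ∀ x, HasGradientAt g (G x) x)
    (ρ : ℝ) (hρ : 0 ≤ ρ) (hLip : ∀ x y, ‖G x - G y‖ ≤ ρ * ‖x - y‖)
    (x u : E) :
    |g (x + u) - g x - ⟪G x, u⟫| ≤ ρ / 2 * ‖u‖ ^ 2 := by
  have h1 := grad_descent_aux g G hg ρ hρ hLip x u
  have hg' : ∀ y, HasGradientAt (fun w => -(g w)) (-(G y)) y := by
    intro y
    have h2 : HasFDerivAt (fun w => -(g w)) (-(InnerProductSpace.toDual ℝ E (G y))) y :=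
      (hg y).hasFDerivAt.neg
    rw [← map_neg] at h2
    exact hasGradientAt_iff_hasFDerivAt.2 h2
  have hLip' : ∀ a b : E, ‖-(G a) - -(G b)‖ ≤ ρ * ‖a - b‖ := by
    intro a b
    calc ‖-G a - -G b‖ = ‖G b - G a‖ := by rw [neg_sub_neg]
      _ ≤ ρ * ‖b - a‖ := hLip b a
      _ = ρ * ‖a - b‖ := by rw [norm_sub_rev]
  have h2 := grad_descent_aux (fun w => -(g w)) (fun w => -(G w)) hg' ρ hρ hLip' x u
  simp only [inner_neg_left] at h2
  rw [abs_le]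
  constructor <;> linarith

/-- Joint differentiability of `f` on the `L²` product space. -/
lemma joint_gradient_aux {E F : Type*} [NormedAddCommGroup E] [InnerProductSpace ℝ E]
    [CompleteSpace E] [NormedAddCommGroup F] [InnerProductSpace ℝ F] [CompleteSpace F]
    (f : E → F → ℝ) (gz : E → F → E) (gc : E → F → F)
    (hgz : ∀ z c, HasGradientAt (fun z' => f z' c) (gz z c) z)
    (hgc : ∀ z c, HasGradientAt (fun c' => f z c') (gc z c) c)
    (ρ : ℝ) (hρ : 0 < ρ)
    (hLip : ∀ z c z' c', ‖gz z c - gz z' c'‖ ^ 2 + ‖gc z c - gc z' c'‖ ^ 2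
      ≤ ρ ^ 2 * (‖z - z'‖ ^ 2 + ‖c - c'‖ ^ 2)) :
    ∀ p : WithLp 2 (E × F), HasGradientAt (fun q : WithLp 2 (E × F) => f q.fst q.snd)
      ((WithLp.equiv 2 (E × F)).symm (gz p.fst p.snd, gc p.fst p.snd)) p := by
  -- one-variable Lipschitz bounds
  have sqle : ∀ a b : ℝ, 0 ≤ a → 0 ≤ b → a ^ 2 ≤ b ^ 2 → a ≤ b := by
    intro a b ha hb h
    nlinarith
  have hLz : ∀ (c : F) (a b : E), ‖gz a c - gz b c‖ ≤ ρ * ‖a - b‖ := by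
    intro c a b
    refine sqle _ _ (norm_nonneg _) (by positivity) ?_
    have := hLip a c b c
    have hn : (0:ℝ) ≤ ‖gc a c - gc b c‖ ^ 2 := by positivity
    simp only [sub_self, norm_zero] at this
    rw [mul_pow]
    nlinarith
  have hLzc : ∀ (a : E) (c c' : F), ‖gz a c - gz a c'‖ ≤ ρ * ‖c - c'‖ := by
    intro a c c'
    refine sqle _ _ (norm_nonneg _) (by positivity) ?_
    have := hLip a c a c'
    simp only [sub_self, norm_zero] at this
    rw [mul_pow]
    nlinarith [sq_nonneg ‖gc a c - gc a c'‖]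
  have hLc : ∀ (a : E) (c c' : F), ‖gc a c - gc a c'‖ ≤ ρ * ‖c - c'‖ := by
    intro a c c'
    refine sqle _ _ (norm_nonneg _) (by positivity) ?_
    have := hLip a c a c'
    simp only [sub_self, norm_zero] at this
    rw [mul_pow]
    nlinarith [sq_nonneg ‖gz a c - gz a c'‖]
  have happroxz : ∀ (c : F) (a u : E), |f (a + u) c - f a c - ⟪gz a c, u⟫| ≤ ρ / 2 * ‖u‖ ^ 2 :=
    fun c a u => grad_approx_aux (fun z' => f z' c) (fun z' => gz z' c)
      (fun z' => hgz z' c) ρ hρ.le (hLz c) a u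
  have happroxc : ∀ (a : E) (c v : F), |f a (c + v) - f a c - ⟪gc a c, v⟫| ≤ ρ / 2 * ‖v‖ ^ 2 :=
    fun a c v => grad_approx_aux (fun c' => f a c') (fun c' => gc a c')
      (fun c' => hgc a c') ρ hρ.le (hLc a) c v
  intro p
  rw [hasGradientAt_iff_hasFDerivAt, hasFDerivAt_iff_isLittleO_nhds_zero,
    Asymptotics.isLittleO_iff]
  intro ε hε
  rw [Metric.eventually_nhds_iff]
  refine ⟨ε / ρ, by positivity, ?_⟩
  intro k hk
  rw [dist_zero_right] at hk
  have hval : (InnerProductSpace.toDual ℝ (WithLp 2 (E × F))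
      ((WithLp.equiv 2 (E × F)).symm (gz p.fst p.snd, gc p.fst p.snd))) k
      = ⟪gz p.fst p.snd, k.fst⟫ + ⟪gc p.fst p.snd, k.snd⟫ := by
    rw [InnerProductSpace.toDual_apply_apply, WithLp.prod_inner_apply,
      WithLp.equiv_symm_apply]
    rfl
  have hfst : (p + k).fst = p.fst + k.fst := rfl
  have hsnd : (p + k).snd = p.snd + k.snd := rfl
  have key : |f (p.fst + k.fst) (p.snd + k.snd) - f p.fst p.snd - (⟪gz p.fst p.snd, k.fst⟫ + ⟪gc p.fst p.snd, k.snd⟫)|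
      ≤ ρ * (‖k.fst‖ ^ 2 + ‖k.snd‖ ^ 2) := by
    have e1 := happroxz (p.snd + k.snd) p.fst k.fst
    have e2 := happroxc p.fst p.snd k.snd
    have e3 : |⟪gz p.fst (p.snd + k.snd) - gz p.fst p.snd, k.fst⟫| ≤ ρ * ‖k.snd‖ * ‖k.fst‖ := by
      calc |⟪gz p.fst (p.snd + k.snd) - gz p.fst p.snd, k.fst⟫|
          ≤ ‖gz p.fst (p.snd + k.snd) - gz p.fst p.snd‖ * ‖k.fst‖ := abs_real_inner_le_norm _ _
        _ ≤ (ρ * ‖k.snd‖) * ‖k.fst‖ := by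
            refine mul_le_mul_of_nonneg_right ?_ (norm_nonneg _)
            simpa [add_sub_cancel_left] using hLzc p.fst (p.snd + k.snd) p.snd
    have hdecomp : f (p.fst + k.fst) (p.snd + k.snd) - f p.fst p.snd - (⟪gz p.fst p.snd, k.fst⟫ + ⟪gc p.fst p.snd, k.snd⟫)
        = (f (p.fst + k.fst) (p.snd + k.snd) - f p.fst (p.snd + k.snd) - ⟪gz p.fst (p.snd + k.snd), k.fst⟫)
          + ⟪gz p.fst (p.snd + k.snd) - gz p.fst p.snd, k.fst⟫
          + (f p.fst (p.snd + k.snd) - f p.fst p.snd - ⟪gc p.fst p.snd, k.snd⟫) := by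
      rw [inner_sub_left]; ring
    rw [hdecomp]
    have habs := abs_add_le (f (p.fst + k.fst) (p.snd + k.snd) - f p.fst (p.snd + k.snd) - ⟪gz p.fst (p.snd + k.snd), k.fst⟫
        + ⟪gz p.fst (p.snd + k.snd) - gz p.fst p.snd, k.fst⟫)
      (f p.fst (p.snd + k.snd) - f p.fst p.snd - ⟪gc p.fst p.snd, k.snd⟫)
    have habs2 := abs_add_le (f (p.fst + k.fst) (p.snd + k.snd) - f p.fst (p.snd + k.snd) - ⟪gz p.fst (p.snd + k.snd), k.fst⟫)
      (⟪gz p.fst (p.snd + k.snd) - gz p.fst p.snd, k.fst⟫)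
    nlinarith [sq_nonneg (‖k.fst‖ - ‖k.snd‖), hρ.le]
  have hnormsq : ‖k‖ ^ 2 = ‖k.fst‖ ^ 2 + ‖k.snd‖ ^ 2 := WithLp.prod_norm_sq_eq_of_L2 k
  calc ‖f (p + k).fst (p + k).snd - f p.fst p.snd - (InnerProductSpace.toDual ℝ (WithLp 2 (E × F))
        ((WithLp.equiv 2 (E × F)).symm (gz p.fst p.snd, gc p.fst p.snd))) k‖
      = |f (p.fst + k.fst) (p.snd + k.snd) - f p.fst p.snd - (⟪gz p.fst p.snd, k.fst⟫ + ⟪gc p.fst p.snd, k.snd⟫)| := by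
        rw [hval, hfst, hsnd, Real.norm_eq_abs]
    _ ≤ ρ * (‖k.fst‖ ^ 2 + ‖k.snd‖ ^ 2) := key
    _ = ρ * ‖k‖ ^ 2 := by rw [hnormsq]
    _ ≤ ε * ‖k‖ := by
        have h1 : ρ * ‖k‖ < ε := by rwa [← lt_div_iff₀' hρ]
        nlinarith [norm_nonneg k]

/-- Joint descent lemma. -/
lemma joint_descent_aux {E F : Type*} [NormedAddCommGroup E] [InnerProductSpace ℝ E]
    [CompleteSpace E] [NormedAddCommGroup F] [InnerProductSpace ℝ F] [CompleteSpace F]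
    (f : E → F → ℝ) (gz : E → F → E) (gc : E → F → F)
    (hgz : ∀ z c, HasGradientAt (fun z' => f z' c) (gz z c) z)
    (hgc : ∀ z c, HasGradientAt (fun c' => f z c') (gc z c) c)
    (ρ : ℝ) (hρ : 0 < ρ)
    (hLip : ∀ z c z' c', ‖gz z c - gz z' c'‖ ^ 2 + ‖gc z c - gc z' c'‖ ^ 2
      ≤ ρ ^ 2 * (‖z - z'‖ ^ 2 + ‖c - c'‖ ^ 2))
    (z u : E) (c v : F) :
    f (z + u) (c + v) ≤ f z c + ⟪gz z c, u⟫ + ⟪gc z c, v⟫ + ρ / 2 * (‖u‖ ^ 2 + ‖v‖ ^ 2) := by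
  set G : WithLp 2 (E × F) → WithLp 2 (E × F) :=
    fun q => (WithLp.equiv 2 (E × F)).symm (gz q.fst q.snd, gc q.fst q.snd) with hG
  have hg : ∀ p, HasGradientAt (fun q : WithLp 2 (E × F) => f q.fst q.snd) (G p) p :=
    joint_gradient_aux f gz gc hgz hgc ρ hρ hLip
  have sqle : ∀ a b : ℝ, 0 ≤ a → 0 ≤ b → a ^ 2 ≤ b ^ 2 → a ≤ b := by
    intro a b ha hb h; nlinarith
  have hGLip : ∀ p q : WithLp 2 (E × F), ‖G p - G q‖ ≤ ρ * ‖p - q‖ := by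
    intro p q
    refine sqle _ _ (norm_nonneg _) (by positivity) ?_
    rw [mul_pow, WithLp.prod_norm_sq_eq_of_L2, WithLp.prod_norm_sq_eq_of_L2]
    have h1 : (G p - G q).fst = gz p.fst p.snd - gz q.fst q.snd := rfl
    have h2 : (G p - G q).snd = gc p.fst p.snd - gc q.fst q.snd := rfl
    have h3 : (p - q).fst = p.fst - q.fst := rfl
    have h4 : (p - q).snd = p.snd - q.snd := rfl
    rw [h1, h2, h3, h4]
    exact hLip _ _ _ _
  have key := grad_descent_aux _ G hg ρ hρ.le hGLip
    ((WithLp.equiv 2 (E × F)).symm (z, c)) ((WithLp.equiv 2 (E × F)).symm (u, v))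
  have e0 : ((WithLp.equiv 2 (E × F)).symm (z, c) + (WithLp.equiv 2 (E × F)).symm (u, v))
      = (WithLp.equiv 2 (E × F)).symm (z + u, c + v) := rfl
  rw [e0] at key
  have e1 : (fun q : WithLp 2 (E × F) => f q.fst q.snd)
      ((WithLp.equiv 2 (E × F)).symm (z + u, c + v)) = f (z + u) (c + v) := rfl
  have e2 : (fun q : WithLp 2 (E × F) => f q.fst q.snd)
      ((WithLp.equiv 2 (E × F)).symm (z, c)) = f z c := rfl
  have e3 : ⟪G ((WithLp.equiv 2 (E × F)).symm (z, c)), (WithLp.equiv 2 (E × F)).symm (u, v)⟫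
      = ⟪gz z c, u⟫ + ⟪gc z c, v⟫ := by
    rw [WithLp.prod_inner_apply]
    rfl
  have e4 : ‖(WithLp.equiv 2 (E × F)).symm (u, v)‖ ^ 2 = ‖u‖ ^ 2 + ‖v‖ ^ 2 := by
    rw [WithLp.prod_norm_sq_eq_of_L2]
    rfl
  rw [e3, e4] at key
  simp only [WithLp.equiv_symm_apply, WithLp.toLp_fst, WithLp.toLp_snd] at key
  linarith [key]



/-- Theorem 2 of the paper (regularized RED): linear convergence in function values of the
alternating gradient / proximal-gradient method under a proximal-PL condition.
The proximal step is encoded by its defining minimization property, and `D k` is the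
forward-backward quantity `D(c^k, ρ)` (its defining minimum is encoded via `IsLeast`). -/
theorem stmt6 {n m : ℕ}
    (f : EuclideanSpace ℝ (Fin n) → EuclideanSpace ℝ (Fin m) → ℝ)
    (h : EuclideanSpace ℝ (Fin m) → ℝ) (hconv : ConvexOn ℝ Set.univ h)
    (gz : EuclideanSpace ℝ (Fin n) → EuclideanSpace ℝ (Fin m) → EuclideanSpace ℝ (Fin n))
    (gc : EuclideanSpace ℝ (Fin n) → EuclideanSpace ℝ (Fin m) → EuclideanSpace ℝ (Fin m))
    (hgz : ∀ z c, HasGradientAt (fun z' => f z' c) (gz z c) z)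
    (hgc : ∀ z c, HasGradientAt (fun c' => f z c') (gc z c) c)
    (ρ : ℝ) (hρ : 0 < ρ)
    (hLip : ∀ z c z' c', ‖gz z c - gz z' c'‖ ^ 2 + ‖gc z c - gc z' c'‖ ^ 2
      ≤ ρ ^ 2 * (‖z - z'‖ ^ 2 + ‖c - c'‖ ^ 2))
    (zs : EuclideanSpace ℝ (Fin n)) (cs : EuclideanSpace ℝ (Fin m))
    (hmin : ∀ z c, f zs cs + h cs ≤ f z c + h c)
    (z : ℕ → EuclideanSpace ℝ (Fin n)) (c : ℕ → EuclideanSpace ℝ (Fin m))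
    (hupdz : ∀ k, z (k + 1) = z k - ρ⁻¹ • gz (z k) (c k))
    (hupdc : ∀ k y, (1 / 2) * ‖c (k + 1) - (c k - ρ⁻¹ • gc (z k) (c k))‖ ^ 2
        + ρ⁻¹ * h (c (k + 1))
      ≤ (1 / 2) * ‖y - (c k - ρ⁻¹ • gc (z k) (c k))‖ ^ 2 + ρ⁻¹ * h y)
    (D : ℕ → ℝ)
    (hD : ∀ k, IsLeast
      (Set.range fun y => (inner ℝ (gc (z k) (c k)) (y - c k) : ℝ)
        + ρ / 2 * ‖y - c k‖ ^ 2 + h y - h (c k)) (-(D k)))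
    (μ : ℝ) (hμ : 0 < μ)
    (hPL : ∀ k, μ * ((f (z k) (c k) + h (c k)) - (f zs cs + h cs))
      ≤ 2 * ρ * D k + ‖gz (z k) (c k)‖ ^ 2) :
    ∀ k, (f (z (k + 1)) (c (k + 1)) + h (c (k + 1))) - (f zs cs + h cs)
      ≤ (1 - μ / (2 * ρ)) * ((f (z k) (c k) + h (c k)) - (f zs cs + h cs)) := by
  intro k
  have hρ0 : ρ ≠ 0 := ne_of_gt hρ
  have hupdz' := hupdz k
  have hupdc' := hupdc k
  have hD' := (hD k).1
  have hPL' := hPL k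
  clear hupdz hupdc hD hPL hmin hconv
  set Z := z k with hZ
  set C := c k with hC
  set Z' := z (k + 1) with hZ'
  set C' := c (k + 1) with hC'
  set gZ := gz Z C with hgZ
  set gC := gc Z C with hgC
  -- expansion of the prox objective
  have e : ∀ a : EuclideanSpace ℝ (Fin m), ‖a - (C - ρ⁻¹ • gC)‖ ^ 2
      = ‖a - C‖ ^ 2 + 2 * (ρ⁻¹ * ⟪gC, a - C⟫) + ρ⁻¹ ^ 2 * ‖gC‖ ^ 2 := by
    intro a
    have h1 : a - (C - ρ⁻¹ • gC) = (a - C) + ρ⁻¹ • gC := by abel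
    rw [h1, norm_add_sq_real, real_inner_smul_right, norm_smul, Real.norm_eq_abs,
      real_inner_comm, mul_pow, sq_abs]
  -- the prox point minimizes the forward-backward surrogate
  have hprox : ∀ y, ⟪gC, C' - C⟫ + ρ / 2 * ‖C' - C‖ ^ 2 + h C' - h C
      ≤ ⟪gC, y - C⟫ + ρ / 2 * ‖y - C‖ ^ 2 + h y - h C := by
    intro y
    have h1 := hupdc' y
    have e2 : (⟪gC, C' - C⟫ + ρ / 2 * ‖C' - C‖ ^ 2 + h C' - h C)
        - (⟪gC, y - C⟫ + ρ / 2 * ‖y - C‖ ^ 2 + h y - h C)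
        = ρ * ((1 / 2 * ‖C' - (C - ρ⁻¹ • gC)‖ ^ 2 + ρ⁻¹ * h C')
          - (1 / 2 * ‖y - (C - ρ⁻¹ • gC)‖ ^ 2 + ρ⁻¹ * h y)) := by
      rw [e C', e y]
      field_simp
      ring
    have h2 : ρ * ((1 / 2 * ‖C' - (C - ρ⁻¹ • gC)‖ ^ 2 + ρ⁻¹ * h C')
        - (1 / 2 * ‖y - (C - ρ⁻¹ • gC)‖ ^ 2 + ρ⁻¹ * h y)) ≤ 0 :=
      mul_nonpos_iff.2 (Or.inl ⟨hρ.le, by linarith⟩)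
    linarith [e2, h2]
  -- value at the prox point is at most -(D k)
  obtain ⟨y₀, hy₀⟩ := hD'
  have hφ : ⟪gC, C' - C⟫ + ρ / 2 * ‖C' - C‖ ^ 2 + h C' - h C ≤ -(D k) := by
    exact (hprox y₀).trans (le_of_eq hy₀)
  -- joint descent step
  have hdesc := joint_descent_aux f gz gc hgz hgc ρ hρ hLip Z (-(ρ⁻¹ • gZ)) C (C' - C)
  have hz1 : Z + -(ρ⁻¹ • gZ) = Z' := by rw [hupdz']; abel
  have hc1 : C + (C' - C) = C' := by abel
  rw [hz1, hc1] at hdesc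
  have i1 : ⟪gZ, -(ρ⁻¹ • gZ)⟫ = -(ρ⁻¹ * ‖gZ‖ ^ 2) := by
    rw [inner_neg_right, real_inner_smul_right, real_inner_self_eq_norm_sq]
  have i2 : ‖-(ρ⁻¹ • gZ)‖ ^ 2 = ρ⁻¹ ^ 2 * ‖gZ‖ ^ 2 := by
    rw [norm_neg, norm_smul, Real.norm_eq_abs, mul_pow, sq_abs]
  rw [i1, i2] at hdesc
  -- combine
  have hstep : f Z' C' + h C' ≤ f Z C + h C - ρ⁻¹ / 2 * ‖gZ‖ ^ 2 - D k := by
    have hco : -(ρ⁻¹ * ‖gZ‖ ^ 2) + ρ / 2 * (ρ⁻¹ ^ 2 * ‖gZ‖ ^ 2 + ‖C' - C‖ ^ 2)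
        = -(ρ⁻¹ / 2) * ‖gZ‖ ^ 2 + ρ / 2 * ‖C' - C‖ ^ 2 := by
      field_simp
      ring
    linarith [hdesc, hφ, hco]
  have h2ρ : (0:ℝ) < 2 * ρ := by linarith
  have key2 : μ / (2 * ρ) * ((f Z C + h C) - (f zs cs + h cs))
      ≤ ρ⁻¹ / 2 * ‖gZ‖ ^ 2 + D k := by
    rw [div_mul_eq_mul_div, div_le_iff₀ h2ρ]
    have hg' : ρ⁻¹ * ρ * ‖gZ‖ ^ 2 = ‖gZ‖ ^ 2 := by
      rw [inv_mul_cancel₀ hρ0, one_mul]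
    linarith [hPL', hg']
  have hring : (1 - μ / (2 * ρ)) * ((f Z C + h C) - (f zs cs + h cs))
      = ((f Z C + h C) - (f zs cs + h cs))
        - μ / (2 * ρ) * ((f Z C + h C) - (f zs cs + h cs)) := by ring
  linarith [hstep, key2, hring]
end
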